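/- Let γ be a simple closed lattice loop in Z² (a cycle in the grid graph Z² with no repeated vertices except the endpoints). Then the set of edges of γ equals the symmetric difference (sum over F₂) of the boundaries of the unit grid squares enclosed by γ. -/

import Mathlib

open Finset

/-- The `𝔽₂`-chain (indicator function on grid edges, viewed as unordered pairs)
of the edges of a walk `γ` in the grid graph `ℤ²`. -/
def edgeChain {r : ℕ} (γ : Fin (r + 1) → ℤ × ℤ) : Sym2 (ℤ × ℤ) → ZMod 2 :=
  fun e => ∑ i : Fin r, if e = s(γ i.castSucc, γ i.succ) then 1 else 0

/-- The `𝔽₂`-chain of the boundary of the unit grid square with lower-left corner `c`. -/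
def squareBoundary (c : ℤ × ℤ) : Sym2 (ℤ × ℤ) → ZMod 2 := fun e =>
  (if e = s(c, (c.1 + 1, c.2)) then 1 else 0) +
  (if e = s((c.1 + 1, c.2), (c.1 + 1, c.2 + 1)) then 1 else 0) +
  (if e = s((c.1 + 1, c.2 + 1), (c.1, c.2 + 1)) then 1 else 0) +
  (if e = s((c.1, c.2 + 1), c) then 1 else 0)

/-- The step from `a` to `b` is a horizontal grid edge crossing the vertical ray going
upward from the center of the unit square with lower-left corner `c`. -/
def crossesRay (a b c : ℤ × ℤ) : Prop :=
  a.2 = b.2 ∧ c.2 < a.2 ∧ ((a.1 = c.1 ∧ b.1 = c.1 + 1) ∨ (a.1 = c.1 + 1 ∧ b.1 = c.1))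

/-- The unit square with lower-left corner `c` is enclosed by the closed curve `γ`
(Jordan curve criterion: the upward ray from its center crosses `γ` an odd number of
times). -/
instance (a b c : ℤ × ℤ) : Decidable (crossesRay a b c) := by
  unfold crossesRay; infer_instance

def enclosed {r : ℕ} (γ : Fin (r + 1) → ℤ × ℤ) (c : ℤ × ℤ) : Prop :=
  Odd (Finset.univ.filter
    (fun i : Fin r => crossesRay (γ i.castSucc) (γ i.succ) c)).card

/-! ### Auxiliary machinery -/

/-- `b` is a unit grid step away from `a`. -/
def IsStep (a b : ℤ × ℤ) : Prop :=
  (b.1 = a.1 + 1 ∧ b.2 = a.2) ∨ (b.1 = a.1 - 1 ∧ b.2 = a.2) ∨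
  (b.1 = a.1 ∧ b.2 = a.2 + 1) ∨ (b.1 = a.1 ∧ b.2 = a.2 - 1)

lemma step_cases (a b : ℤ × ℤ) (h : |b.1 - a.1| + |b.2 - a.2| = 1) : IsStep a b := by
  unfold IsStep
  rcases abs_cases (b.1 - a.1) with ⟨h1, _⟩ | ⟨h1, _⟩ <;>
    rcases abs_cases (b.2 - a.2) with ⟨h2, _⟩ | ⟨h2, _⟩ <;> omega

lemma zmod2_add_self : ∀ z : ZMod 2, z + z = 0 := by decide

/-- Number of crossings of the upward ray from square `c` by the walk `γ`. -/
def cnt {r : ℕ} (γ : Fin (r + 1) → ℤ × ℤ) (c : ℤ × ℤ) : ℕ :=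
  (Finset.univ.filter
    (fun i : Fin r => crossesRay (γ i.castSucc) (γ i.succ) c)).card

lemma enclosed_iff {r : ℕ} (γ : Fin (r + 1) → ℤ × ℤ) (c : ℤ × ℤ) :
    enclosed γ c ↔ Odd (cnt γ c) := Iff.rfl

lemma cast_parity (n : ℕ) : ((n : ZMod 2)) = if Odd n then 1 else 0 := by
  rcases Nat.even_or_odd n with h | h
  · rw [if_neg (Nat.not_odd_iff_even.mpr h)]
    obtain ⟨k, rfl⟩ := h
    push_cast
    exact zmod2_add_self _
  · rw [if_pos h]
    obtain ⟨k, rfl⟩ := h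
    push_cast
    have key : ∀ z : ZMod 2, 2 * z + 1 = 1 := by decide
    exact key _

lemma telescope {r : ℕ} (γ : Fin (r+1) → ℤ × ℤ) (hclosed : γ (Fin.last r) = γ 0)
    (φ : ℤ × ℤ → ZMod 2) :
    ∑ i : Fin r, (φ (γ i.castSucc) + φ (γ i.succ)) = 0 := by
  rw [Finset.sum_add_distrib]
  have h1 : ∑ i : Fin r, φ (γ i.castSucc)
      = (∑ i : Fin (r+1), φ (γ i)) - φ (γ (Fin.last r)) := by
    rw [Fin.sum_univ_castSucc (f := fun i => φ (γ i))]; ring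
  have h2 : ∑ i : Fin r, φ (γ i.succ)
      = (∑ i : Fin (r+1), φ (γ i)) - φ (γ 0) := by
    rw [Fin.sum_univ_succ (f := fun i => φ (γ i))]; ring
  rw [h1, h2, hclosed]
  exact zmod2_add_self _

lemma cnt_sum {r : ℕ} (γ : Fin (r + 1) → ℤ × ℤ) (c : ℤ × ℤ) :
    ∑ i : Fin r, (if crossesRay (γ i.castSucc) (γ i.succ) c then (1 : ZMod 2) else 0)
      = ((cnt γ c : ZMod 2)) := Finset.sum_boole _ _

lemma adj_eq (p q a b : ℤ × ℤ) (h : s(p,q) = s(a,b)) :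
    |q.1 - p.1| + |q.2 - p.2| = |b.1 - a.1| + |b.2 - a.2| := by
  rw [Sym2.eq_iff] at h
  rcases h with ⟨rfl, rfl⟩ | ⟨rfl, rfl⟩
  · rfl
  · rw [abs_sub_comm q.1, abs_sub_comm q.2]

/-! ### Per-step identities -/

lemma stepH (a b : ℤ × ℤ) (u y : ℤ) :
    (if s((u,y),(u+1,y)) = s(a,b) then (1 : ZMod 2) else 0)
      = (if crossesRay a b (u, y-1) then 1 else 0) + (if crossesRay a b (u, y) then 1 else 0) := by
  obtain ⟨a1, a2⟩ := a; obtain ⟨b1, b2⟩ := b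
  have h1 : (s((u,y),(u+1,y)) = s(((a1,a2) : ℤ × ℤ), (b1,b2)))
      ↔ (a2 = y ∧ b2 = y ∧ ((a1 = u ∧ b1 = u + 1) ∨ (a1 = u + 1 ∧ b1 = u))) := by
    simp only [Sym2.eq_iff, Prod.mk.injEq]; omega
  simp only [h1]
  split_ifs <;> simp only [crossesRay] at * <;> first | omega | decide

lemma stepV (a b : ℤ × ℤ) (hs : IsStep a b) (x y : ℤ) :
    (if s((x,y),(x,y+1)) = s(a,b) then (1 : ZMod 2) else 0)
      + (if crossesRay a b (x-1, y) then 1 else 0) + (if crossesRay a b (x, y) then 1 else 0)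
    = (if a.1 = x ∧ y < a.2 then 1 else 0) + (if b.1 = x ∧ y < b.2 then 1 else 0) := by
  obtain ⟨a1, a2⟩ := a; obtain ⟨b1, b2⟩ := b
  have h1 : (s((x,y),(x,y+1)) = s(((a1,a2) : ℤ × ℤ), (b1,b2)))
      ↔ (a1 = x ∧ b1 = x ∧ ((a2 = y ∧ b2 = y + 1) ∨ (a2 = y + 1 ∧ b2 = y))) := by
    simp only [Sym2.eq_iff, Prod.mk.injEq]; omega
  simp only [IsStep, Prod.mk.injEq] at hs
  simp only [h1]
  rcases hs with ⟨hb1, hb2⟩ | ⟨hb1, hb2⟩ | ⟨hb1, hb2⟩ | ⟨hb1, hb2⟩ <;>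
    split_ifs <;> simp only [crossesRay] at * <;> first | omega | decide

lemma stepLow (a b : ℤ × ℤ) (hs : IsStep a b) (c : ℤ × ℤ) (ha : c.2 < a.2) (hb : c.2 < b.2) :
    (if crossesRay a b c then (1 : ZMod 2) else 0)
    = (if a.1 ≤ c.1 then 0 else 1) + (if b.1 ≤ c.1 then 0 else 1) := by
  obtain ⟨a1, a2⟩ := a; obtain ⟨b1, b2⟩ := b
  simp only [IsStep, Prod.mk.injEq] at hs
  rcases hs with ⟨hb1, hb2⟩ | ⟨hb1, hb2⟩ | ⟨hb1, hb2⟩ | ⟨hb1, hb2⟩ <;>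
    split_ifs <;> simp only [crossesRay] at * <;> first | omega | decide

/-! ### Square boundary evaluation -/

lemma SBh (c : ℤ × ℤ) (u y : ℤ) :
    squareBoundary c (s((u,y),(u+1,y)))
      = (if c = (u, y) then 1 else 0) + (if c = (u, y-1) then 1 else 0) := by
  obtain ⟨c1, c2⟩ := c
  have h1 : (s((u,y),(u+1,y)) = s(((c1,c2) : ℤ × ℤ), (c1+1,c2))) ↔ (c1 = u ∧ c2 = y) := by
    simp only [Sym2.eq_iff, Prod.mk.injEq]; omega
  have h2 : (s((u,y),(u+1,y)) = s(((c1+1,c2) : ℤ × ℤ), (c1+1,c2+1))) ↔ False := by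
    simp only [Sym2.eq_iff, Prod.mk.injEq, iff_false]; omega
  have h3 : (s((u,y),(u+1,y)) = s(((c1+1,c2+1) : ℤ × ℤ), (c1,c2+1))) ↔ (c1 = u ∧ c2 = y - 1) := by
    simp only [Sym2.eq_iff, Prod.mk.injEq]; omega
  have h4 : (s((u,y),(u+1,y)) = s(((c1,c2+1) : ℤ × ℤ), (c1,c2))) ↔ False := by
    simp only [Sym2.eq_iff, Prod.mk.injEq, iff_false]; omega
  simp only [squareBoundary, h1, h2, h3, h4, Prod.mk.injEq, if_false]
  split_ifs <;> first | omega | decide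

lemma SBv (c : ℤ × ℤ) (x y : ℤ) :
    squareBoundary c (s((x,y),(x,y+1)))
      = (if c = (x, y) then 1 else 0) + (if c = (x-1, y) then 1 else 0) := by
  obtain ⟨c1, c2⟩ := c
  have h1 : (s((x,y),(x,y+1)) = s(((c1,c2) : ℤ × ℤ), (c1+1,c2))) ↔ False := by
    simp only [Sym2.eq_iff, Prod.mk.injEq, iff_false]; omega
  have h2 : (s((x,y),(x,y+1)) = s(((c1+1,c2) : ℤ × ℤ), (c1+1,c2+1))) ↔ (c1 = x - 1 ∧ c2 = y) := by
    simp only [Sym2.eq_iff, Prod.mk.injEq]; omega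
  have h3 : (s((x,y),(x,y+1)) = s(((c1+1,c2+1) : ℤ × ℤ), (c1,c2+1))) ↔ False := by
    simp only [Sym2.eq_iff, Prod.mk.injEq, iff_false]; omega
  have h4 : (s((x,y),(x,y+1)) = s(((c1,c2+1) : ℤ × ℤ), (c1,c2))) ↔ (c1 = x ∧ c2 = y) := by
    simp only [Sym2.eq_iff, Prod.mk.injEq]; omega
  simp only [squareBoundary, h1, h2, h3, h4, Prod.mk.injEq, if_false]
  split_ifs <;> first | omega | decide

lemma SB0 (c p q : ℤ × ℤ) (h : |q.1 - p.1| + |q.2 - p.2| ≠ 1) :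
    squareBoundary c (s(p,q)) = 0 := by
  have h1 : s(p,q) ≠ s(c, (c.1+1, c.2)) := fun he => h (by rw [adj_eq _ _ _ _ he]; norm_num)
  have h2 : s(p,q) ≠ s((c.1+1, c.2), (c.1+1, c.2+1)) := fun he =>
    h (by rw [adj_eq _ _ _ _ he]; norm_num)
  have h3 : s(p,q) ≠ s((c.1+1, c.2+1), (c.1, c.2+1)) := fun he =>
    h (by rw [adj_eq _ _ _ _ he]; norm_num)
  have h4 : s(p,q) ≠ s((c.1, c.2+1), c) := fun he => h (by rw [adj_eq _ _ _ _ he]; norm_num)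
  simp [squareBoundary, h1, h2, h3, h4]

/-! ### Edge-level identities -/

lemma edgeH {r : ℕ} (γ : Fin (r + 1) → ℤ × ℤ) (u y : ℤ) :
    edgeChain γ (s((u,y),(u+1,y)))
      = ((cnt γ (u, y-1) : ZMod 2)) + ((cnt γ (u, y) : ZMod 2)) := by
  unfold edgeChain
  rw [← cnt_sum, ← cnt_sum, ← Finset.sum_add_distrib]
  exact Finset.sum_congr rfl fun i _ => stepH _ _ _ _

lemma edgeV {r : ℕ} (γ : Fin (r + 1) → ℤ × ℤ) (hclosed : γ (Fin.last r) = γ 0)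
    (hstep : ∀ i : Fin r,
      |(γ i.succ).1 - (γ i.castSucc).1| + |(γ i.succ).2 - (γ i.castSucc).2| = 1)
    (x y : ℤ) :
    edgeChain γ (s((x,y),(x,y+1)))
      = ((cnt γ (x-1, y) : ZMod 2)) + ((cnt γ (x, y) : ZMod 2)) := by
  have h0 := telescope γ hclosed (fun p : ℤ × ℤ => if p.1 = x ∧ y < p.2 then (1 : ZMod 2) else 0)
  have key : edgeChain γ (s((x,y),(x,y+1)))
      + ((cnt γ (x-1, y) : ZMod 2)) + ((cnt γ (x, y) : ZMod 2)) = 0 := by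
    unfold edgeChain
    rw [← cnt_sum, ← cnt_sum, ← Finset.sum_add_distrib, ← Finset.sum_add_distrib]
    exact (Finset.sum_congr rfl fun i _ =>
      stepV _ _ (step_cases _ _ (hstep i)) x y).trans h0
  have h2 : ∀ a b c : ZMod 2, a + b + c = 0 → a = b + c := by decide
  exact h2 _ _ _ key

lemma edge0 {r : ℕ} (γ : Fin (r + 1) → ℤ × ℤ)
    (hstep : ∀ i : Fin r,
      |(γ i.succ).1 - (γ i.castSucc).1| + |(γ i.succ).2 - (γ i.castSucc).2| = 1)
    (p q : ℤ × ℤ) (h : |q.1 - p.1| + |q.2 - p.2| ≠ 1) :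
    edgeChain γ (s(p,q)) = 0 := by
  unfold edgeChain
  refine Finset.sum_eq_zero fun i _ => ?_
  rw [if_neg]
  intro he
  exact h (by rw [adj_eq _ _ _ _ he]; exact hstep i)

/-- Squares with a very low center are not enclosed. -/
lemma not_enclosed_low {r : ℕ} (γ : Fin (r + 1) → ℤ × ℤ) (hclosed : γ (Fin.last r) = γ 0)
    (hstep : ∀ i : Fin r,
      |(γ i.succ).1 - (γ i.castSucc).1| + |(γ i.succ).2 - (γ i.castSucc).2| = 1)
    (c : ℤ × ℤ) (hlow : ∀ j : Fin (r + 1), c.2 < (γ j).2) :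
    ¬ enclosed γ c := by
  intro hodd
  rw [enclosed_iff] at hodd
  have h0f := telescope γ hclosed (fun p : ℤ × ℤ => if p.1 ≤ c.1 then (0 : ZMod 2) else 1)
  have h0 : ((cnt γ c : ZMod 2)) = 0 := by
    rw [← cnt_sum]
    exact (Finset.sum_congr rfl fun i _ =>
      stepLow _ _ (step_cases _ _ (hstep i)) c (hlow _) (hlow _)).trans h0f
  rw [cast_parity, if_pos hodd] at h0
  exact one_ne_zero h0

/-! ### Finishing lemmas for a single edge -/

lemma finishH {r : ℕ} (γ : Fin (r + 1) → ℤ × ℤ) (F : Finset (ℤ × ℤ))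
    (hmem : ∀ c : ℤ × ℤ, (if c ∈ F then (1 : ZMod 2) else 0) = ((cnt γ c : ZMod 2)))
    (u y : ℤ) :
    edgeChain γ (s((u,y),(u+1,y))) = ∑ c ∈ F, squareBoundary c (s((u,y),(u+1,y))) := by
  rw [edgeH, Finset.sum_congr rfl fun c _ => SBh c u y, Finset.sum_add_distrib,
    Finset.sum_ite_eq' F ((u, y) : ℤ × ℤ) fun _ => (1 : ZMod 2),
    Finset.sum_ite_eq' F ((u, y - 1) : ℤ × ℤ) fun _ => (1 : ZMod 2), hmem, hmem]
  exact add_comm _ _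

lemma finishV {r : ℕ} (γ : Fin (r + 1) → ℤ × ℤ) (hclosed : γ (Fin.last r) = γ 0)
    (hstep : ∀ i : Fin r,
      |(γ i.succ).1 - (γ i.castSucc).1| + |(γ i.succ).2 - (γ i.castSucc).2| = 1)
    (F : Finset (ℤ × ℤ))
    (hmem : ∀ c : ℤ × ℤ, (if c ∈ F then (1 : ZMod 2) else 0) = ((cnt γ c : ZMod 2)))
    (x y : ℤ) :
    edgeChain γ (s((x,y),(x,y+1))) = ∑ c ∈ F, squareBoundary c (s((x,y),(x,y+1))) := by
  rw [edgeV γ hclosed hstep, Finset.sum_congr rfl fun c _ => SBv c x y, Finset.sum_add_distrib,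
    Finset.sum_ite_eq' F ((x, y) : ℤ × ℤ) fun _ => (1 : ZMod 2),
    Finset.sum_ite_eq' F ((x - 1, y) : ℤ × ℤ) fun _ => (1 : ZMod 2), hmem, hmem]
  exact add_comm _ _

/-! ### Main theorem -/

theorem stmt_16 (r : ℕ) (hr : 1 ≤ r) (γ : Fin (r + 1) → ℤ × ℤ)
    (hclosed : γ (Fin.last r) = γ 0)
    (hstep : ∀ i : Fin r,
      |(γ i.succ).1 - (γ i.castSucc).1| + |(γ i.succ).2 - (γ i.castSucc).2| = 1)
    (hsimple : ∀ i j : Fin r, γ i.castSucc = γ j.castSucc → i = j) :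
    ∃ F : Finset (ℤ × ℤ), (∀ c : ℤ × ℤ, c ∈ F ↔ enclosed γ c) ∧
      edgeChain γ = ∑ c ∈ F, squareBoundary c := by
  classical
  -- a bound on the coordinates of γ
  obtain ⟨M, hM⟩ : ∃ M : ℤ, ∀ j : Fin (r + 1),
      -M ≤ (γ j).1 ∧ (γ j).1 ≤ M ∧ -M ≤ (γ j).2 ∧ (γ j).2 ≤ M := by
    refine ⟨((univ : Finset (Fin (r+1))).image fun j => |(γ j).1| ⊔ |(γ j).2|).max'
      (by simp [Finset.image_nonempty]), fun j => ?_⟩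
    have hj := Finset.le_max' _ (|(γ j).1| ⊔ |(γ j).2|)
      (Finset.mem_image_of_mem (fun j => |(γ j).1| ⊔ |(γ j).2|) (Finset.mem_univ j))
    have h1 := abs_le.mp (le_trans (le_max_left _ _) hj)
    have h2 := abs_le.mp (le_trans (le_max_right _ _) hj)
    exact ⟨h1.1, h1.2, h2.1, h2.2⟩
  set box : Finset (ℤ × ℤ) := Finset.Icc (-M-1) M ×ˢ Finset.Icc (-M) M with hbox
  set F : Finset (ℤ × ℤ) := box.filter (enclosed γ) with hFdef
  have hF : ∀ c : ℤ × ℤ, c ∈ F ↔ enclosed γ c := by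
    intro c
    constructor
    · exact fun hc => (Finset.mem_filter.mp hc).2
    · intro hc
      refine Finset.mem_filter.mpr ⟨?_, hc⟩
      have hodd := (enclosed_iff γ c).mp hc
      obtain ⟨k, hk⟩ := hodd
      have hpos : (0 : ℕ) < cnt γ c := by omega
      have hne : (univ.filter
          (fun i : Fin r => crossesRay (γ i.castSucc) (γ i.succ) c)).Nonempty :=
        Finset.card_pos.mp hpos
      obtain ⟨i, hi⟩ := hne
      obtain ⟨heq, hlt, hcol⟩ := (Finset.mem_filter.mp hi).2
      have hai := hM i.castSucc
      have hc2 : -M ≤ c.2 := by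
        by_contra hlow
        exact not_enclosed_low γ hclosed hstep c
          (fun j => by have := (hM j).2.2.1; omega) hc
      rw [hbox, Finset.mem_product, Finset.mem_Icc, Finset.mem_Icc]
      constructor
      · rcases hcol with ⟨h1, _⟩ | ⟨h1, _⟩ <;> omega
      · omega
  refine ⟨F, hF, ?_⟩
  have hmem : ∀ c : ℤ × ℤ, (if c ∈ F then (1 : ZMod 2) else 0) = ((cnt γ c : ZMod 2)) := by
    intro c
    by_cases hc : enclosed γ c
    · rw [if_pos ((hF c).mpr hc), cast_parity, if_pos ((enclosed_iff γ c).mp hc)]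
    · rw [if_neg (fun h => hc ((hF c).mp h)), cast_parity,
        if_neg (fun h => hc ((enclosed_iff γ c).mpr h))]
  funext e
  rw [show (∑ c ∈ F, squareBoundary c) e = ∑ c ∈ F, squareBoundary c e from
    Finset.sum_apply e F squareBoundary]
  induction e using Sym2.ind with
  | _ p q =>
    obtain ⟨p1, p2⟩ := p; obtain ⟨q1, q2⟩ := q
    by_cases hpq : |q1 - p1| + |q2 - p2| = 1
    · have hs := step_cases (p1, p2) (q1, q2) hpq
      simp only [IsStep] at hs
      rcases hs with ⟨hs1, hs2⟩ | ⟨hs1, hs2⟩ | ⟨hs1, hs2⟩ | ⟨hs1, hs2⟩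
      · have he : s(((p1, p2) : ℤ × ℤ), (q1, q2)) = s(((p1, p2) : ℤ × ℤ), (p1 + 1, p2)) := by
          rw [Sym2.eq_iff]; left; exact ⟨rfl, by rw [hs1, hs2]⟩
        rw [he]
        exact finishH γ F hmem p1 p2
      · have he : s(((p1, p2) : ℤ × ℤ), (q1, q2)) = s(((q1, q2) : ℤ × ℤ), (q1 + 1, q2)) := by
          rw [Sym2.eq_iff]; right
          exact ⟨by rw [show p1 = q1 + 1 by omega, show p2 = q2 by omega], rfl⟩
        rw [he]
        exact finishH γ F hmem q1 q2
      · have he : s(((p1, p2) : ℤ × ℤ), (q1, q2)) = s(((p1, p2) : ℤ × ℤ), (p1, p2 + 1)) := by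
          rw [Sym2.eq_iff]; left; exact ⟨rfl, by rw [hs1, hs2]⟩
        rw [he]
        exact finishV γ hclosed hstep F hmem p1 p2
      · have he : s(((p1, p2) : ℤ × ℤ), (q1, q2)) = s(((q1, q2) : ℤ × ℤ), (q1, q2 + 1)) := by
          rw [Sym2.eq_iff]; right
          exact ⟨by rw [show p1 = q1 by omega, show p2 = q2 + 1 by omega], rfl⟩
        rw [he]
        exact finishV γ hclosed hstep F hmem q1 q2
    · rw [edge0 γ hstep _ _ hpq]
      exact (Finset.sum_eq_zero fun c _ => SB0 c _ _ hpq).symm
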